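/- Let a : (0,∞) → (0,∞) satisfy a(t+s)/a(t) → 1 as t → ∞ for every s ∈ ℝ, and let p(t,x,y) be a symmetric kernel with p(t+s,x,y)/p(t,x,y) → 1 as t → ∞, satisfying the Chapman–Kolmogorov equation p(t+s,x,y) = ∫ p(t,x,z)p(s,z,y)dz on a domain O. If a(t)p(t,x,y) ≤ C_x^{1+|y|} for large t and h is any locally uniform limit point of a(t_k)p(t_k,·,·) along t_k → ∞, then h(x,y) = ∫_O h(x,z) p(s,z,y) dz for every s > 0. -/

import Mathlib

open Filter MeasureTheory

lemma my_integrable_rexp {n : ℕ} {b : ℝ} (hb : 0 < b) :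
    Integrable (fun v : EuclideanSpace ℝ (Fin n) => Real.exp (-b * ‖v‖^2)) := by
  have h := (GaussianFourier.integrable_cexp_neg_mul_sq_norm_add
    (V := EuclideanSpace ℝ (Fin n)) (b := (b:ℂ)) (by simpa using hb) 0 0).norm
  convert h using 3 with v
  rw [Complex.norm_exp]
  norm_num
  norm_cast
  exact Or.inl rfl

theorem limit_point_invariance (n : ℕ) (O : Set (EuclideanSpace ℝ (Fin n))) (hO : IsOpen O)
    (a : ℝ → ℝ) (hapos : ∀ t : ℝ, 0 < t → 0 < a t)
    (halim : ∀ s : ℝ, Tendsto (fun t => a (t + s) / a t) atTop (nhds 1))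
    (p : ℝ → EuclideanSpace ℝ (Fin n) → EuclideanSpace ℝ (Fin n) → ℝ)
    (hmeas : ∀ t : ℝ, 0 < t → Measurable (Function.uncurry (p t)))
    (hpnn : ∀ t : ℝ, 0 < t → ∀ x y, 0 ≤ p t x y)
    (hsymm : ∀ t x y, p t x y = p t y x)
    (hgauss : ∀ t : ℝ, 0 < t → ∀ x y,
      p t x y ≤ (2 * Real.pi * t) ^ (-(n : ℝ) / 2) * Real.exp (-‖x - y‖ ^ 2 / (2 * t)))
    (hck : ∀ t : ℝ, 0 < t → ∀ s : ℝ, 0 < s → ∀ x ∈ O, ∀ y ∈ O,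
      p (t + s) x y = ∫ z in O, p t x z * p s z y)
    (hratio : ∀ s : ℝ, ∀ x ∈ O, ∀ y ∈ O,
      Tendsto (fun t => p (t + s) x y / p t x y) atTop (nhds 1))
    (hbd : ∀ x ∈ O, ∃ C : ℝ, 1 < C ∧ ∃ t0 : ℝ, 0 < t0 ∧ ∀ t ≥ t0, ∀ y ∈ O,
      a t * p t x y ≤ C ^ (1 + ‖y‖))
    (tk : ℕ → ℝ) (htk : Tendsto tk atTop atTop)
    (h : EuclideanSpace ℝ (Fin n) → EuclideanSpace ℝ (Fin n) → ℝ)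
    (hconv : ∀ K : Set (EuclideanSpace ℝ (Fin n) × EuclideanSpace ℝ (Fin n)),
      K ⊆ O ×ˢ O → IsCompact K →
      TendstoUniformlyOn (fun k q => a (tk k) * p (tk k) q.1 q.2)
        (fun q => h q.1 q.2) atTop K) :
    ∀ s : ℝ, 0 < s → ∀ x ∈ O, ∀ y ∈ O, h x y = ∫ z in O, h x z * p s z y := by
  intro s hs x hx y hy
  obtain ⟨C, hC1, t0, ht0, hCbd⟩ := hbd x hx
  have hC0 : (0:ℝ) < C := lt_trans one_pos hC1
  -- pointwise convergence
  have hpt : ∀ z ∈ O, Tendsto (fun k => a (tk k) * p (tk k) x z) atTop (nhds (h x z)) := by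
    intro z hz
    have h1 := hconv {(x, z)} (by simp [Set.singleton_subset_iff, hx, hz]) isCompact_singleton
    exact h1.tendsto_at rfl
  have hev : ∀ᶠ k in atTop, tk k ≥ max t0 1 := htk.eventually_ge_atTop _
  have hr : Tendsto (fun k => p (tk k + s) x y / p (tk k) x y) atTop (nhds 1) :=
    (hratio s x hx y hy).comp htk
  have hne : ∀ᶠ k in atTop, p (tk k) x y ≠ 0 := by
    filter_upwards [hr.eventually (eventually_gt_nhds (by norm_num : (1:ℝ)/2 < 1))] with k hk
    intro h0
    rw [h0, div_zero] at hk
    norm_num at hk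
  -- limit of a(tk) p(tk+s, x, y)
  have hA : Tendsto (fun k => a (tk k) * p (tk k + s) x y) atTop (nhds (h x y)) := by
    have h1 := (hpt y hy).mul hr
    rw [mul_one] at h1
    refine Tendsto.congr' ?_ h1
    filter_upwards [hne] with k hk
    field_simp
  -- Chapman-Kolmogorov identity
  have hIeq : ∀ᶠ k in atTop, a (tk k) * p (tk k + s) x y
      = ∫ z in O, a (tk k) * (p (tk k) x z * p s z y) := by
    filter_upwards [hev] with k hk
    have hkpos : (0:ℝ) < tk k := lt_of_lt_of_le one_pos ((le_max_right _ _).trans hk)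
    rw [hck (tk k) hkpos s hs x hx y hy, ← integral_const_mul]
  -- bound function
  set L : ℝ := Real.log C with hL
  have hLpos : 0 < L := Real.log_pos hC1
  set G : ℝ := (2 * Real.pi * s) ^ (-(n:ℝ)/2) with hG
  have hGnn : 0 ≤ G := Real.rpow_nonneg (by positivity) _
  set bound : EuclideanSpace ℝ (Fin n) → ℝ :=
    fun z => Real.exp (L * (1 + ‖z‖)) * (G * Real.exp (-‖z - y‖^2 / (2*s))) with hbound
  have hCb : ∀ r : ℝ, C ^ (1 + r) = Real.exp (L * (1 + r)) := fun r =>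
    Real.rpow_def_of_pos hC0 _
  -- integrability of the bound
  have hK : Integrable bound (volume.restrict O) := by
    refine Integrable.restrict ?_
    set K : ℝ := L + (L + ‖y‖/s)^2 * s with hKdef
    refine Integrable.mono' (((my_integrable_rexp (n := n)
      (b := 1/(4*s)) (by positivity)).const_mul (Real.exp K * G))) ?_ ?_
    · apply Continuous.aestronglyMeasurable
      fun_prop
    · refine Eventually.of_forall fun z => ?_
      have hb0 : 0 ≤ bound z := by positivity
      rw [Real.norm_eq_abs, abs_of_nonneg hb0]
      have h1 : (‖z‖ - ‖y‖)^2 ≤ ‖z - y‖^2 := by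
        have h2 := abs_norm_sub_norm_le z y
        have h3 := abs_nonneg (‖z‖ - ‖y‖)
        nlinarith [sq_abs (‖z‖ - ‖y‖)]
      have hexp : L * (1 + ‖z‖) + (-‖z - y‖^2 / (2*s)) ≤ K + (-(1/(4*s)) * ‖z‖^2) := by
        rw [← sub_nonneg]
        have heq : K + (-(1/(4*s)) * ‖z‖^2) - (L * (1 + ‖z‖) + (-‖z - y‖^2 / (2*s)))
            = (4*L^2*s^2 + 8*L*‖y‖*s + 4*‖y‖^2 - ‖z‖^2 - 4*L*s*‖z‖ + 2*‖z - y‖^2) / (4*s) := by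
          rw [hKdef]
          field_simp
          ring
        rw [heq]
        apply div_nonneg _ (by positivity)
        nlinarith [sq_nonneg (‖z‖ - 2*L*s - 2*‖y‖), sq_nonneg ‖y‖]
      calc bound z = G * Real.exp (L * (1 + ‖z‖) + (-‖z - y‖^2 / (2*s))) := by
            rw [hbound, Real.exp_add]; ring
        _ ≤ G * Real.exp (K + (-(1/(4*s)) * ‖z‖^2)) := by
            apply mul_le_mul_of_nonneg_left (Real.exp_le_exp.mpr hexp) hGnn
        _ = Real.exp K * G * Real.exp (-(1/(4*s)) * ‖z‖^2) := by
            rw [Real.exp_add]; ring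
  -- dominated convergence
  have hDC : Tendsto (fun k => ∫ z in O, a (tk k) * (p (tk k) x z * p s z y)) atTop
      (nhds (∫ z in O, h x z * p s z y)) := by
    refine tendsto_integral_filter_of_dominated_convergence bound ?_ ?_ hK ?_
    · filter_upwards [hev] with k hk
      have hkpos : (0:ℝ) < tk k := lt_of_lt_of_le one_pos ((le_max_right _ _).trans hk)
      have m1 : Measurable fun z => p (tk k) x z :=
        (hmeas _ hkpos).comp (measurable_const.prodMk measurable_id)
      have m2 : Measurable fun z => p s z y :=
        (hmeas s hs).comp (measurable_id.prodMk measurable_const)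
      exact ((m1.mul m2).const_mul _).aestronglyMeasurable
    · filter_upwards [hev] with k hk
      rw [ae_restrict_iff' hO.measurableSet]
      refine Eventually.of_forall fun z hz => ?_
      have hkpos : (0:ℝ) < tk k := lt_of_lt_of_le one_pos ((le_max_right _ _).trans hk)
      have hkt0 : tk k ≥ t0 := (le_max_left _ _).trans hk
      have hFnn : 0 ≤ a (tk k) * (p (tk k) x z * p s z y) :=
        mul_nonneg (hapos _ hkpos).le (mul_nonneg (hpnn _ hkpos x z) (hpnn s hs z y))
      rw [Real.norm_eq_abs, abs_of_nonneg hFnn, ← mul_assoc]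
      calc a (tk k) * p (tk k) x z * p s z y
          ≤ C ^ (1 + ‖z‖) * p s z y :=
            mul_le_mul_of_nonneg_right (hCbd (tk k) hkt0 z hz) (hpnn s hs z y)
        _ ≤ bound z := by
            rw [hCb]
            exact mul_le_mul_of_nonneg_left (hgauss s hs z y) (Real.exp_nonneg _)
    · rw [ae_restrict_iff' hO.measurableSet]
      refine Eventually.of_forall fun z hz => ?_
      simpa only [mul_assoc] using (hpt z hz).mul_const (p s z y)
  exact tendsto_nhds_unique (Tendsto.congr' hIeq hA) hDC
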